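/- Let f and f₀ be probability densities on [0,1] (nonnegative Borel functions integrating to 1 with respect to Lebesgue measure) with ‖f₀‖_∞ < ∞, and let g : [0,1] → ℝ be bounded measurable. Let C₁, C₂ > 0 and suppose that h(f, f₀) · ‖g‖_∞ ≤ C₁ and ∫₀¹ g² ≤ C₂, where h(f, f₀) = ( ∫₀¹ (√f − √f₀)² )^{1/2} denotes the Hellinger distance. Then | ∫₀¹ g² (f − f₀) | ≤ C₁² + C₁ · √( 4 C₂ ‖f₀‖_∞ + C₁² ). -/

import Mathlib

open MeasureTheory

set_option maxHeartbeats 1000000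

lemma cauchy_schwarz_integral {μ : Measure ℝ} {u v : ℝ → ℝ}
    (hu : MemLp u 2 μ) (hv : MemLp v 2 μ) :
    |∫ x, u x * v x ∂μ| ≤
      Real.sqrt (∫ x, u x ^ 2 ∂μ) * Real.sqrt (∫ x, v x ^ 2 ∂μ) := by
  have hpq : (2:ℝ).HolderConjugate 2 := Real.holderConjugate_iff.mpr ⟨one_lt_two, by norm_num⟩
  have hu' : MemLp u (ENNReal.ofReal 2) μ := by simpa using hu
  have hv' : MemLp v (ENNReal.ofReal 2) μ := by simpa using hv
  have h := integral_mul_norm_le_Lp_mul_Lq hpq hu' hv'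
  have h1 : |∫ x, u x * v x ∂μ| ≤ ∫ x, ‖u x‖ * ‖v x‖ ∂μ := by
    calc |∫ x, u x * v x ∂μ| ≤ ∫ x, ‖u x * v x‖ ∂μ := by
          simpa using norm_integral_le_integral_norm (fun x => u x * v x)
      _ = ∫ x, ‖u x‖ * ‖v x‖ ∂μ := by simp [norm_mul]
  refine h1.trans (h.trans_eq ?_)
  have e1 : ∀ (w : ℝ → ℝ), (∫ x, ‖w x‖ ^ (2:ℝ) ∂μ) = ∫ x, w x ^ 2 ∂μ := by
    intro w
    refine integral_congr_ae (ae_of_all _ fun x => ?_)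
    simp only []
    rw [show ((2:ℝ)) = ((2:ℕ):ℝ) by norm_num, Real.rpow_natCast]
    simp [sq_abs]
  have e2 : ∀ (w : ℝ → ℝ), (∫ x, ‖w x‖ ^ (2:ℝ) ∂μ) ^ ((1:ℝ)/2)
      = Real.sqrt (∫ x, w x ^ 2 ∂μ) := by
    intro w
    rw [e1, Real.sqrt_eq_rpow]
  rw [e2, e2]

/-- Let `f, f₀` be probability densities on `[0,1]` with `f₀` bounded by
`D`, and `g` bounded measurable with `|g| ≤ G` on `[0,1]`. If `h(f,f₀) · G ≤ C₁` and
`∫₀¹ g² ≤ C₂`, where `h(f,f₀) = (∫₀¹ (√f − √f₀)²)^{1/2}` is the Hellinger distance, then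
`|∫₀¹ g² (f − f₀)| ≤ C₁² + C₁ √(4 C₂ D + C₁²)`. -/
theorem hellinger_second_moment_bound
    (f f₀ g : ℝ → ℝ) (hf : Measurable f) (hf₀ : Measurable f₀) (hg : Measurable g)
    (hfpos : ∀ x ∈ Set.Icc (0 : ℝ) 1, 0 ≤ f x)
    (hf₀pos : ∀ x ∈ Set.Icc (0 : ℝ) 1, 0 ≤ f₀ x)
    (hfint : (∫ x in Set.Icc (0 : ℝ) 1, f x) = 1)
    (hf₀int : (∫ x in Set.Icc (0 : ℝ) 1, f₀ x) = 1)
    (D : ℝ) (hD : ∀ x ∈ Set.Icc (0 : ℝ) 1, f₀ x ≤ D)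
    (G C₁ C₂ : ℝ) (hC₁ : 0 < C₁) (hC₂ : 0 < C₂)
    (hgG : ∀ x ∈ Set.Icc (0 : ℝ) 1, |g x| ≤ G)
    (hhel : Real.sqrt (∫ x in Set.Icc (0 : ℝ) 1,
        (Real.sqrt (f x) - Real.sqrt (f₀ x)) ^ 2) * G ≤ C₁)
    (hg2 : (∫ x in Set.Icc (0 : ℝ) 1, (g x) ^ 2) ≤ C₂) :
    |∫ x in Set.Icc (0 : ℝ) 1, (g x) ^ 2 * (f x - f₀ x)| ≤
      C₁ ^ 2 + C₁ * Real.sqrt (4 * C₂ * D + C₁ ^ 2) := by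
  set μ := volume.restrict (Set.Icc (0:ℝ) 1) with hμ
  haveI : IsFiniteMeasure μ := by
    constructor
    rw [hμ, Measure.restrict_apply_univ, Real.volume_Icc]
    norm_num
  have mem0 : (0:ℝ) ∈ Set.Icc (0:ℝ) 1 := ⟨le_refl 0, zero_le_one⟩
  have hG0 : 0 ≤ G := le_trans (abs_nonneg _) (hgG 0 mem0)
  have hD0 : 0 ≤ D := le_trans (hf₀pos 0 mem0) (hD 0 mem0)
  -- a.e. facts
  have aefpos : ∀ᵐ x ∂μ, 0 ≤ f x := (ae_restrict_iff' measurableSet_Icc).2 (ae_of_all _ hfpos)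
  have aef₀pos : ∀ᵐ x ∂μ, 0 ≤ f₀ x := (ae_restrict_iff' measurableSet_Icc).2 (ae_of_all _ hf₀pos)
  have aegG : ∀ᵐ x ∂μ, |g x| ≤ G := (ae_restrict_iff' measurableSet_Icc).2 (ae_of_all _ hgG)
  have aeD : ∀ᵐ x ∂μ, f₀ x ≤ D := (ae_restrict_iff' measurableSet_Icc).2 (ae_of_all _ hD)
  -- integrability of f, f₀
  have hfInt : Integrable f μ := by
    by_contra h
    rw [integral_undef h] at hfint; norm_num at hfint
  have hf₀Int : Integrable f₀ μ := by
    by_contra h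
    rw [integral_undef h] at hf₀int; norm_num at hf₀int
  set v : ℝ → ℝ := fun x => Real.sqrt (f x) - Real.sqrt (f₀ x) with hv
  set u : ℝ → ℝ := fun x => g x ^ 2 * Real.sqrt (f₀ x) with hu
  have hvm : Measurable v := (hf.sqrt).sub (hf₀.sqrt)
  have hum : Measurable u := (hg.pow measurable_const).mul hf₀.sqrt
  -- v² is integrable (dominated by 2f + 2f₀)
  have hv2Int : Integrable (fun x => v x ^ 2) μ := by
    refine Integrable.mono' ((hfInt.const_mul 2).add (hf₀Int.const_mul 2))
      (hvm.pow measurable_const).aestronglyMeasurable ?_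
    filter_upwards [aefpos, aef₀pos] with x hx hx0
    rw [Real.norm_of_nonneg (sq_nonneg _)]
    have : v x ^ 2 ≤ 2 * Real.sqrt (f x) ^ 2 + 2 * Real.sqrt (f₀ x) ^ 2 := by
      simp only [hv]; nlinarith [sq_nonneg (Real.sqrt (f x) + Real.sqrt (f₀ x))]
    calc v x ^ 2 ≤ 2 * Real.sqrt (f x) ^ 2 + 2 * Real.sqrt (f₀ x) ^ 2 := this
      _ = 2 * f x + 2 * f₀ x := by rw [Real.sq_sqrt hx, Real.sq_sqrt hx0]
  -- u is bounded a.e., hence MemLp 2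
  have huBd : ∀ᵐ x ∂μ, ‖u x‖ ≤ G ^ 2 * Real.sqrt D := by
    filter_upwards [aegG, aef₀pos, aeD] with x hx hx0 hxD
    simp only [hu, norm_mul, Real.norm_eq_abs]
    have h1 : |g x ^ 2| ≤ G ^ 2 := by
      rw [abs_pow]; exact pow_le_pow_left₀ (abs_nonneg _) hx 2
    have h2 : |Real.sqrt (f₀ x)| ≤ Real.sqrt D := by
      rw [abs_of_nonneg (Real.sqrt_nonneg _)]
      exact Real.sqrt_le_sqrt hxD
    exact mul_le_mul h1 h2 (abs_nonneg _) (sq_nonneg _)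
  have hu2 : MemLp u 2 μ :=
    MemLp.of_bound hum.aestronglyMeasurable _ huBd
  have hv2 : MemLp v 2 μ :=
    (memLp_two_iff_integrable_sq hvm.aestronglyMeasurable).2 hv2Int
  -- g² is MemLp 2 (bounded), hence g² integrable, g⁴ integrable
  have hg2mem : MemLp (fun x => g x ^ 2) 2 μ := by
    refine MemLp.of_bound (hg.pow measurable_const).aestronglyMeasurable (G ^ 2) ?_
    filter_upwards [aegG] with x hx
    rw [Real.norm_eq_abs, abs_pow]
    exact pow_le_pow_left₀ (abs_nonneg _) hx 2
  have hg2Int : Integrable (fun x => g x ^ 2) μ := hg2mem.integrable (by norm_num)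
  -- w := g² v² is integrable
  have hwInt : Integrable (fun x => g x ^ 2 * v x ^ 2) μ := by
    refine Integrable.mono' (hv2Int.const_mul (G ^ 2))
      ((hg.pow measurable_const).mul (hvm.pow measurable_const)).aestronglyMeasurable ?_
    filter_upwards [aegG] with x hx
    rw [Real.norm_eq_abs, abs_mul, abs_of_nonneg (sq_nonneg (g x)),
      abs_of_nonneg (sq_nonneg (v x))]
    have : g x ^ 2 ≤ G ^ 2 := by
      have := sq_abs (g x); nlinarith [abs_nonneg (g x)]
    nlinarith [sq_nonneg (v x)]
  -- u*v integrable via AM-GM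
  have huvInt : Integrable (fun x => u x * v x) μ := by
    refine Integrable.mono' ((hu2.integrable_sq.add hv2Int).div_const 2)
      (hum.mul hvm).aestronglyMeasurable (ae_of_all _ fun x => ?_)
    rw [Real.norm_eq_abs, abs_mul]
    show |u x| * |v x| ≤ ((fun x => u x ^ 2) + fun x => v x ^ 2) x / 2
    simp only [Pi.add_apply]
    have key : ∀ a b : ℝ, |a| * |b| ≤ (a ^ 2 + b ^ 2) / 2 := fun a b => by
      nlinarith [sq_nonneg (|a| - |b|), sq_abs a, sq_abs b]
    exact key (u x) (v x)
  -- decomposition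
  have hdecomp : (∫ x, g x ^ 2 * (f x - f₀ x) ∂μ)
      = (∫ x, g x ^ 2 * v x ^ 2 ∂μ) + 2 * ∫ x, u x * v x ∂μ := by
    have : (∫ x, g x ^ 2 * (f x - f₀ x) ∂μ)
        = ∫ x, (g x ^ 2 * v x ^ 2 + 2 * (u x * v x)) ∂μ := by
      refine integral_congr_ae ?_
      filter_upwards [aefpos, aef₀pos] with x hx hx0
      have e1 : Real.sqrt (f x) ^ 2 = f x := Real.sq_sqrt hx
      have e2 : Real.sqrt (f₀ x) ^ 2 = f₀ x := Real.sq_sqrt hx0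
      simp only [hv, hu]
      nlinarith [Real.sqrt_nonneg (f x), Real.sqrt_nonneg (f₀ x)]
    rw [this, integral_add hwInt (huvInt.const_mul 2), integral_const_mul]
  -- set H := ∫ v²
  set H := ∫ x, v x ^ 2 ∂μ with hH
  have hHnn : 0 ≤ H := integral_nonneg fun x => sq_nonneg _
  have hhel' : Real.sqrt H * G ≤ C₁ := hhel
  -- bound on first term: ∫ g² v² ≤ G² H ≤ C₁²
  have hterm1 : (∫ x, g x ^ 2 * v x ^ 2 ∂μ) ≤ C₁ ^ 2 := by
    have h1 : (∫ x, g x ^ 2 * v x ^ 2 ∂μ) ≤ ∫ x, G ^ 2 * v x ^ 2 ∂μ := by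
      refine integral_mono_ae hwInt (hv2Int.const_mul _) ?_
      filter_upwards [aegG] with x hx
      have : g x ^ 2 ≤ G ^ 2 := by
        have := sq_abs (g x); nlinarith [abs_nonneg (g x)]
      nlinarith [sq_nonneg (v x)]
    have h2 : (∫ x, G ^ 2 * v x ^ 2 ∂μ) = G ^ 2 * H := integral_const_mul _ _
    have h3 : G ^ 2 * H = (Real.sqrt H * G) ^ 2 := by
      rw [mul_pow, Real.sq_sqrt hHnn]; ring
    calc (∫ x, g x ^ 2 * v x ^ 2 ∂μ) ≤ G ^ 2 * H := h1.trans_eq h2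
      _ = (Real.sqrt H * G) ^ 2 := h3
      _ ≤ C₁ ^ 2 := by
          refine pow_le_pow_left₀ ?_ hhel' 2
          positivity
  -- bound ∫ u²  ≤ G² * D * C₂
  have hu2bound : (∫ x, u x ^ 2 ∂μ) ≤ G ^ 2 * D * C₂ := by
    have h1 : (∫ x, u x ^ 2 ∂μ) ≤ ∫ x, (G ^ 2 * D) * g x ^ 2 ∂μ := by
      refine integral_mono_ae hu2.integrable_sq (hg2Int.const_mul _) ?_
      filter_upwards [aegG, aef₀pos, aeD] with x hx hx0 hxD
      simp only [hu]
      have e2 : Real.sqrt (f₀ x) ^ 2 = f₀ x := Real.sq_sqrt hx0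
      have hg2le : g x ^ 2 ≤ G ^ 2 := by
        have := sq_abs (g x); nlinarith [abs_nonneg (g x)]
      calc (g x ^ 2 * Real.sqrt (f₀ x)) ^ 2 = g x ^ 2 * (Real.sqrt (f₀ x) ^ 2) * g x ^ 2 := by
            ring
        _ = g x ^ 2 * f₀ x * g x ^ 2 := by rw [e2]
        _ ≤ G ^ 2 * D * g x ^ 2 := by
            have h4 : g x ^ 2 * f₀ x ≤ G ^ 2 * D :=
              mul_le_mul hg2le hxD hx0 (by positivity)
            nlinarith [sq_nonneg (g x)]
    have h2 : (∫ x, (G ^ 2 * D) * g x ^ 2 ∂μ) = (G ^ 2 * D) * ∫ x, g x ^ 2 ∂μ :=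
      integral_const_mul _ _
    have h3 : (G ^ 2 * D) * (∫ x, g x ^ 2 ∂μ) ≤ G ^ 2 * D * C₂ := by
      have : 0 ≤ G ^ 2 * D := by positivity
      nlinarith [hg2]
    linarith [h1.trans_eq h2]
  -- Cauchy–Schwarz bound on second term
  have hterm2 : |∫ x, u x * v x ∂μ| ≤ C₁ * Real.sqrt (D * C₂) := by
    have hcs := cauchy_schwarz_integral hu2 hv2
    have h1 : Real.sqrt (∫ x, u x ^ 2 ∂μ) ≤ G * Real.sqrt (D * C₂) := by
      have : Real.sqrt (∫ x, u x ^ 2 ∂μ) ≤ Real.sqrt (G ^ 2 * (D * C₂)) := by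
        refine Real.sqrt_le_sqrt ?_
        rw [← mul_assoc]; exact hu2bound
      rw [Real.sqrt_mul (by positivity), Real.sqrt_sq hG0] at this
      exact this
    calc |∫ x, u x * v x ∂μ| ≤ Real.sqrt (∫ x, u x ^ 2 ∂μ) * Real.sqrt H := hcs
      _ ≤ (G * Real.sqrt (D * C₂)) * Real.sqrt H := by
          exact mul_le_mul_of_nonneg_right h1 (Real.sqrt_nonneg _)
      _ = (Real.sqrt H * G) * Real.sqrt (D * C₂) := by ring
      _ ≤ C₁ * Real.sqrt (D * C₂) := by
          exact mul_le_mul_of_nonneg_right hhel' (Real.sqrt_nonneg _)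
  -- combine
  have hw_nonneg : 0 ≤ ∫ x, g x ^ 2 * v x ^ 2 ∂μ :=
    integral_nonneg fun x => mul_nonneg (sq_nonneg _) (sq_nonneg _)
  have hfinal : |∫ x, g x ^ 2 * (f x - f₀ x) ∂μ| ≤ C₁ ^ 2 + 2 * (C₁ * Real.sqrt (D * C₂)) := by
    rw [hdecomp]
    calc |(∫ x, g x ^ 2 * v x ^ 2 ∂μ) + 2 * ∫ x, u x * v x ∂μ|
        ≤ |∫ x, g x ^ 2 * v x ^ 2 ∂μ| + |2 * ∫ x, u x * v x ∂μ| := abs_add_le _ _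
      _ = (∫ x, g x ^ 2 * v x ^ 2 ∂μ) + 2 * |∫ x, u x * v x ∂μ| := by
          rw [abs_of_nonneg hw_nonneg, abs_mul, abs_two]
      _ ≤ C₁ ^ 2 + 2 * (C₁ * Real.sqrt (D * C₂)) := by
          have := hterm2
          linarith [hterm1]
  -- final inequality: 2 C₁ √(DC₂) ≤ C₁ √(4C₂D + C₁²)
  refine hfinal.trans ?_
  have key : 2 * Real.sqrt (D * C₂) ≤ Real.sqrt (4 * C₂ * D + C₁ ^ 2) := by
    have h1 : 2 * Real.sqrt (D * C₂) = Real.sqrt (4 * C₂ * D) := by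
      rw [show (4:ℝ) * C₂ * D = 2 ^ 2 * (D * C₂) by ring,
        Real.sqrt_mul (show (0:ℝ) ≤ 2 ^ 2 by norm_num) (D * C₂),
        Real.sqrt_sq (show (0:ℝ) ≤ 2 by norm_num)]
    rw [h1]
    exact Real.sqrt_le_sqrt (by nlinarith [sq_nonneg C₁])
  have := mul_le_mul_of_nonneg_left key hC₁.le
  linarith
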